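/- Let M ≥ 1, let A be an invertible M×M complex matrix, let Q be any M×M complex matrix, and let δ ≥ 0 satisfy δ ‖Q‖ ‖A^{-1}‖ < 1, where ‖·‖ is the operator norm. Then A + δQ is invertible and | ln|det(A + δQ)| − ln|det A| | ≤ δ ‖A^{-1}‖ ‖Q‖_tr / (1 − δ ‖Q‖ ‖A^{-1}‖), where ‖Q‖_tr denotes the trace norm (sum of the singular values) of Q. -/

import Mathlib

noncomputable section
set_option maxHeartbeats 1000000

/-- The trace (nuclear) norm of a complex matrix: the sum of its singular
values, i.e. of the square roots of the eigenvalues of `Qᴴ Q`. -/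
def traceNorm {M : ℕ} (Q : Matrix (Fin M) (Fin M) ℂ) : ℝ :=
  ∑ i, Real.sqrt ((Matrix.isHermitian_conjTranspose_mul_self Q).eigenvalues i)

namespace LogDetAux
open Matrix

variable {M : ℕ}

def detCM (M : ℕ) : ContinuousMultilinearMap ℂ (fun _ : Fin M => (Fin M → ℂ)) ℂ :=
  (Matrix.detRowAlternating (n := Fin M) (R := ℂ)).toMultilinearMap.mkContinuous
    (Nat.factorial M) <| by
  intro m
  rw [show ((Matrix.detRowAlternating (n := Fin M) (R := ℂ)).toMultilinearMap m) =
      (Matrix.of m).det from rfl, Matrix.det_apply]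
  refine (norm_sum_le _ _).trans ?_
  have hterm : ∀ σ : Equiv.Perm (Fin M),
      ‖Equiv.Perm.sign σ • ∏ i, (Matrix.of m) (σ i) i‖ ≤ ∏ i, ‖m i‖ := by
    intro σ
    rw [Units.smul_def, zsmul_eq_mul, norm_mul]
    have h1 : ‖((Equiv.Perm.sign σ : ℤ) : ℂ)‖ = 1 := by
      rcases Int.units_eq_one_or (Equiv.Perm.sign σ) with h | h <;> simp [h]
    rw [h1, one_mul, norm_prod]
    have h2 : ∏ i, ‖m (σ i)‖ = ∏ i, ‖m i‖ := Equiv.prod_comp σ (fun i => ‖m i‖)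
    calc ∏ i, ‖(Matrix.of m) (σ i) i‖ ≤ ∏ i, ‖m (σ i)‖ :=
          Finset.prod_le_prod (fun _ _ => norm_nonneg _)
            (fun i _ => norm_le_pi_norm (m (σ i)) i)
      _ = ∏ i, ‖m i‖ := h2
  calc ∑ σ : Equiv.Perm (Fin M), ‖Equiv.Perm.sign σ • ∏ i, (Matrix.of m) (σ i) i‖
      ≤ ∑ _σ : Equiv.Perm (Fin M), ∏ i, ‖m i‖ := Finset.sum_le_sum fun σ _ => hterm σ
    _ = (Nat.factorial M) * ∏ i, ‖m i‖ := by
        rw [Finset.sum_const, Finset.card_univ, Fintype.card_perm, Fintype.card_fin,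
          nsmul_eq_mul]

lemma sum_det_updateRow (N Q : Matrix (Fin M) (Fin M) ℂ) :
    ∑ i, (N.updateRow i (Q i)).det = (Q * N.adjugate).trace := by
  have h : ∀ i, (N.updateRow i (Q i)).det = ∑ k, Q i k * N.adjugate k i := by
    intro i
    rw [← Matrix.cramer_transpose_apply]
    have hb : Q i = ∑ k, Pi.single k (Q i k) := (Finset.univ_sum_single (Q i)).symm
    conv_lhs => rw [hb]
    rw [map_sum, Finset.sum_apply]
    congr 1; funext k
    have h1 : (Pi.single k (Q i k) : Fin M → ℂ) = Q i k • (Pi.single k 1 : Fin M → ℂ) := by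
      rw [← Pi.single_smul, smul_eq_mul, mul_one]
    rw [h1, _root_.map_smul, Pi.smul_apply, smul_eq_mul, Matrix.adjugate_def]
    rfl
  simp only [h, Matrix.trace, Matrix.diag, Matrix.mul_apply]

lemma hasDerivAt_det (A Q : Matrix (Fin M) (Fin M) ℂ) (t : ℝ) :
    HasDerivAt (fun s : ℝ => (A + (s : ℂ) • Q).det)
      ((Q * (A + (t : ℂ) • Q).adjugate).trace) t := by
  let m0 : Fin M → Fin M → ℂ := A
  let q0 : Fin M → Fin M → ℂ := Q
  have hc : HasDerivAt (fun s : ℝ => m0 + (s : ℂ) • q0) q0 t := by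
    have h1 : HasDerivAt (fun s : ℝ => ((s : ℝ) : ℂ)) 1 t :=
      Complex.ofRealCLM.hasDerivAt
    have := (h1.smul_const q0).const_add m0
    simpa using this
  have hd := ((detCM M).hasFDerivAt (m0 + (t : ℂ) • q0)).restrictScalars ℝ
  have hcomp := hd.comp_hasDerivAt t hc
  have happ : (detCM M).linearDeriv (m0 + (t : ℂ) • q0) q0
      = (Q * (A + (t : ℂ) • Q).adjugate).trace := by
    rw [ContinuousMultilinearMap.linearDeriv_apply, ← sum_det_updateRow]
    rfl
  have e : (((detCM M).linearDeriv (m0 + (t : ℂ) • q0)).restrictScalars ℝ) q0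
      = (Q * (A + (t : ℂ) • Q).adjugate).trace := happ
  rw [e] at hcomp
  exact hcomp

lemma hasDerivAt_log_abs {p : ℝ → ℂ} {p' : ℂ} {t : ℝ} (hp : HasDerivAt p p' t)
    (h0 : p t ≠ 0) :
    HasDerivAt (fun s => Real.log (‖p s‖)) ((p' / p t).re) t := by
  have hre : HasDerivAt (fun s => (p s).re) p'.re t :=
    (Complex.reCLM.hasFDerivAt.comp_hasDerivAt t hp)
  have him : HasDerivAt (fun s => (p s).im) p'.im t :=
    (Complex.imCLM.hasFDerivAt.comp_hasDerivAt t hp)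
  have hg : HasDerivAt (fun s => Complex.normSq (p s))
      (p'.re * (p t).re + (p t).re * p'.re + (p'.im * (p t).im + (p t).im * p'.im)) t := by
    have := (hre.mul hre).add (him.mul him)
    refine HasDerivAt.congr_of_eventuallyEq this (Filter.Eventually.of_forall fun s => ?_)
    simp [Complex.normSq_apply]
  have hne : Complex.normSq (p t) ≠ 0 := by
    simpa [Complex.normSq_eq_zero] using h0
  have hlog := (Real.hasDerivAt_log hne).comp t hg
  have heq : (fun s => Real.log (‖p s‖))
      = fun s => Real.log (Complex.normSq (p s)) / 2 := by
    funext s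
    rw [Complex.norm_def, Real.log_sqrt (Complex.normSq_nonneg _)]
  rw [heq]
  have := hlog.div_const 2
  refine this.congr_deriv ?_
  symm
  rw [Complex.div_re]
  field_simp [hne]
  ring
lemma traceNorm_nonneg (Q : Matrix (Fin M) (Fin M) ℂ) : 0 ≤ traceNorm Q :=
  Finset.sum_nonneg fun _ _ => Real.sqrt_nonneg _

lemma trace_holder (X Q : Matrix (Fin M) (Fin M) ℂ) :
    ‖Matrix.trace (X * Q)‖ ≤ ‖Matrix.toEuclideanCLM (𝕜 := ℂ) X‖ * traceNorm Q := by
  classical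
  set hH := Matrix.isHermitian_conjTranspose_mul_self Q with hHdef
  set v : OrthonormalBasis (Fin M) ℂ (EuclideanSpace ℂ (Fin M)) := hH.eigenvectorBasis with hv
  set W : Matrix (Fin M) (Fin M) ℂ := (hH.eigenvectorUnitary : Matrix (Fin M) (Fin M) ℂ) with hW
  have hWmem : W ∈ Matrix.unitaryGroup (Fin M) ℂ := hH.eigenvectorUnitary.2
  -- trace invariance under unitary conjugation
  have h1 : (X * Q).trace = (star W * (X * Q) * W).trace := by
    rw [Matrix.trace_mul_comm (star W * (X * Q)) W, ← mul_assoc,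
      Matrix.mem_unitaryGroup_iff.mp hWmem, one_mul]
  -- diagonal entries as inner products
  set T := Matrix.toEuclideanCLM (𝕜 := ℂ) X with hT
  set S := Matrix.toEuclideanCLM (𝕜 := ℂ) Q with hS
  have h2 : ∀ j, (star W * (X * Q) * W) j j = inner ℂ (v j) (T (S (v j))) := by
    intro j
    rw [EuclideanSpace.inner_eq_star_dotProduct]
    have hTS : T (S (v j)) = Matrix.toEuclideanCLM (𝕜 := ℂ) (X * Q) (v j) := by
      rw [_root_.map_mul]; rfl
    rw [hTS]
    simp only [Matrix.ofLp_toEuclideanCLM]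
    simp only [Matrix.mul_apply, Matrix.mulVec, dotProduct, Matrix.star_apply,
      Matrix.mul_apply, hW, Matrix.IsHermitian.eigenvectorUnitary_apply]
    simp only [Finset.sum_mul, Finset.mul_sum]
    rw [Finset.sum_comm]
    refine Finset.sum_congr rfl fun x _ => Finset.sum_congr rfl fun y _ => ?_
    refine Finset.sum_congr rfl fun l _ => ?_
    rw [hv]
    simp only [Pi.star_apply]
    ring
  have hSv : ∀ j, ‖S (v j)‖ = Real.sqrt (hH.eigenvalues j) := by
    intro j
    have hEig : Matrix.toEuclideanCLM (𝕜 := ℂ) (Qᴴ * Q) (v j) = hH.eigenvalues j • v j := by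
      ext i
      exact congrFun (hH.mulVec_eigenvectorBasis j) i
    have hadj : (inner ℂ (S (v j)) (S (v j)) : ℂ) = inner ℂ (v j) ((hH.eigenvalues j : ℝ) • v j) := by
      rw [← hEig, _root_.map_mul]
      have hst : Matrix.toEuclideanCLM (𝕜 := ℂ) Qᴴ = star S := by
        rw [hS, ← map_star]; rfl
      rw [hst]
      rw [ContinuousLinearMap.mul_apply, ContinuousLinearMap.star_eq_adjoint,
        ContinuousLinearMap.adjoint_inner_right]
    have hsq : ‖S (v j)‖ ^ 2 = hH.eigenvalues j := by
      have h5 := inner_self_eq_norm_sq (𝕜 := ℂ) (S (v j))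
      rw [hadj, RCLike.real_smul_eq_coe_smul (K := ℂ), inner_smul_right] at h5
      rw [← h5]
      have h6 : (inner ℂ (v j) (v j) : ℂ) = 1 := by
        rw [inner_self_eq_norm_sq_to_K]
        simp [v.orthonormal.1 j]
      rw [h6]
      simp
    rw [← hsq, Real.sqrt_sq (norm_nonneg _)]
  have h3 : ∀ j, ‖(inner ℂ (v j) (T (S (v j))) : ℂ)‖
      ≤ ‖T‖ * Real.sqrt (hH.eigenvalues j) := by
    intro j
    calc ‖(inner ℂ (v j) (T (S (v j))) : ℂ)‖ ≤ ‖v j‖ * ‖T (S (v j))‖ := by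
          exact norm_inner_le_norm _ _
      _ = ‖T (S (v j))‖ := by rw [v.orthonormal.1 j, one_mul]
      _ ≤ ‖T‖ * ‖S (v j)‖ := T.le_opNorm _
      _ = ‖T‖ * Real.sqrt (hH.eigenvalues j) := by rw [hSv j]
  calc ‖(X * Q).trace‖ = ‖∑ j, (star W * (X * Q) * W) j j‖ := by
        rw [h1]; rfl
    _ ≤ ∑ j, ‖(star W * (X * Q) * W) j j‖ :=
        norm_sum_le _ _
    _ ≤ ∑ j, ‖T‖ * Real.sqrt (hH.eigenvalues j) := by
        refine Finset.sum_le_sum fun j _ => ?_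
        rw [h2 j]; exact h3 j
    _ = ‖T‖ * traceNorm Q := by rw [traceNorm, Finset.mul_sum]

lemma inverse_one_add {R : Type*} [NormedRing R] [CompleteSpace R] [NormOneClass R]
    (x : R) (hx : ‖x‖ < 1) :
    ∃ u : Rˣ, (u : R) = 1 + x ∧ ‖(↑u⁻¹ : R)‖ ≤ (1 - ‖x‖)⁻¹ := by
  have h1 : ‖-x‖ < 1 := by rwa [norm_neg]
  refine ⟨Units.oneSub (-x) h1, by simp [Units.oneSub, sub_neg_eq_add], ?_⟩
  set u := Units.oneSub (-x) h1 with hu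
  have huv : (u : R) = 1 + x := by simp [hu, Units.oneSub, sub_neg_eq_add]
  have hinv : (↑u⁻¹ : R) = 1 - x * ↑u⁻¹ := by
    have hmul : (1 + x) * ↑u⁻¹ = 1 := by rw [← huv]; exact u.mul_inv
    have h2 : (↑u⁻¹ : R) + x * ↑u⁻¹ = 1 := by
      calc (↑u⁻¹ : R) + x * ↑u⁻¹ = (1 + x) * ↑u⁻¹ := by noncomm_ring
        _ = 1 := hmul
    calc (↑u⁻¹ : R) = (↑u⁻¹ + x * ↑u⁻¹) - x * ↑u⁻¹ := by abel
      _ = 1 - x * ↑u⁻¹ := by rw [h2]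
  have hb : ‖(↑u⁻¹ : R)‖ ≤ 1 + ‖x‖ * ‖(↑u⁻¹ : R)‖ := by
    calc ‖(↑u⁻¹ : R)‖ = ‖(1 : R) - x * ↑u⁻¹‖ := by rw [← hinv]
      _ ≤ ‖(1 : R)‖ + ‖x * ↑u⁻¹‖ := norm_sub_le _ _
      _ ≤ 1 + ‖x‖ * ‖(↑u⁻¹ : R)‖ := by
          rw [norm_one]; exact add_le_add (le_refl 1) (norm_mul_le _ _)
  have hpos : 0 < 1 - ‖x‖ := by linarith
  have : ‖(↑u⁻¹ : R)‖ * (1 - ‖x‖) ≤ 1 := by nlinarith [norm_nonneg (↑u⁻¹ : R)]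
  calc ‖(↑u⁻¹ : R)‖ = ‖(↑u⁻¹ : R)‖ * (1 - ‖x‖) * (1 - ‖x‖)⁻¹ := by
        field_simp
    _ ≤ 1 * (1 - ‖x‖)⁻¹ := by
        exact mul_le_mul_of_nonneg_right this (by positivity)
    _ = (1 - ‖x‖)⁻¹ := one_mul _

end LogDetAux


open LogDetAux in
/-- If `A` is invertible and `δ ‖Q‖ ‖A⁻¹‖ < 1` (operator norms with respect to
the Euclidean norm), then `A + δQ` is invertible and
`| ln|det(A + δQ)| − ln|det A| | ≤ δ ‖A⁻¹‖ ‖Q‖_tr / (1 − δ ‖Q‖ ‖A⁻¹‖)`. -/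
theorem logdet_perturbation (M : ℕ) (hM : 1 ≤ M)
    (A Q : Matrix (Fin M) (Fin M) ℂ) (hA : IsUnit A) (δ : ℝ) (hδ : 0 ≤ δ)
    (h : δ * ‖Matrix.toEuclideanCLM (𝕜 := ℂ) Q‖
          * ‖Matrix.toEuclideanCLM (𝕜 := ℂ) A⁻¹‖ < 1) :
    IsUnit (A + (δ : ℂ) • Q) ∧
    |Real.log ‖(A + (δ : ℂ) • Q).det‖
        - Real.log ‖A.det‖|
      ≤ δ * ‖Matrix.toEuclideanCLM (𝕜 := ℂ) A⁻¹‖ * traceNorm Q /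
          (1 - δ * ‖Matrix.toEuclideanCLM (𝕜 := ℂ) Q‖
            * ‖Matrix.toEuclideanCLM (𝕜 := ℂ) A⁻¹‖) := by
  classical
  haveI : Nonempty (Fin M) := ⟨⟨0, hM⟩⟩
  let φ : Matrix (Fin M) (Fin M) ℂ ≃⋆ₐ[ℂ]
      (EuclideanSpace ℂ (Fin M) →L[ℂ] EuclideanSpace ℂ (Fin M)) :=
    Matrix.toEuclideanCLM (𝕜 := ℂ) (n := Fin M)
  have h1 : φ (1 : Matrix (Fin M) (Fin M) ℂ) = 1 := map_one φ
  have hsymm1 : φ.symm 1 = 1 := by rw [← h1, StarAlgEquiv.symm_apply_apply]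
  have h4 : ∀ (x : Matrix (Fin M) (Fin M) ℂ), IsUnit (φ x) → IsUnit x := by
    intro x hx
    rcases hx with ⟨u, hu⟩
    refine ⟨⟨x, φ.symm ↑u⁻¹, ?_, ?_⟩, rfl⟩
    · have e : φ (x * φ.symm ↑u⁻¹) = 1 := by
        rw [_root_.map_mul, StarAlgEquiv.apply_symm_apply, ← hu, u.mul_inv]
      have := congrArg φ.symm e
      rwa [StarAlgEquiv.symm_apply_apply, hsymm1] at this
    · have e : φ (φ.symm ↑u⁻¹ * x) = 1 := by
        rw [_root_.map_mul, StarAlgEquiv.apply_symm_apply, ← hu, u.inv_mul]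
      have := congrArg φ.symm e
      rwa [StarAlgEquiv.symm_apply_apply, hsymm1] at this
  have hAdet : IsUnit A.det := (Matrix.isUnit_iff_isUnit_det A).mp hA
  set nQ := ‖Matrix.toEuclideanCLM (𝕜 := ℂ) Q‖ with hnQ
  set nA := ‖Matrix.toEuclideanCLM (𝕜 := ℂ) A⁻¹‖ with hnA
  have hnA0 : 0 ≤ nA := norm_nonneg _
  set ε := δ * nQ * nA with hεdef
  have hε0 : 0 ≤ ε := by positivity
  have hε1 : ε < 1 := h
  have hone : (0:ℝ) < 1 - ε := by linarith
  set B := A⁻¹ * Q with hBdef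
  have hAA : A * A⁻¹ = 1 := Matrix.mul_nonsing_inv A hAdet
  have hfact : ∀ t : ℝ, A + (t:ℂ) • Q = A * (1 + (t:ℂ) • B) := by
    intro t
    rw [mul_add, mul_one, Matrix.mul_smul, hBdef, ← mul_assoc, hAA, one_mul]
  have key : ∀ t ∈ Set.Icc (0:ℝ) δ, IsUnit (A + (t:ℂ) • Q) ∧
      ‖φ ((A + (t:ℂ) • Q)⁻¹)‖ ≤ (1 - ε)⁻¹ * nA := by
    intro t ht
    obtain ⟨ht0, htδ⟩ := ht
    have hxnorm : ‖φ ((t:ℂ) • B)‖ ≤ ε := by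
      rw [map_smul]
      have hBn : ‖φ B‖ ≤ nA * nQ := by
        rw [hBdef, _root_.map_mul]
        exact norm_mul_le _ _
      have hsm : ‖((t:ℝ):ℂ) • φ B‖ ≤ ‖((t:ℝ):ℂ)‖ * ‖φ B‖ := norm_smul_le ((t:ℝ):ℂ) (φ B)
      refine hsm.trans ?_
      rw [Complex.norm_real, Real.norm_eq_abs, abs_of_nonneg ht0]
      calc t * ‖φ B‖ ≤ δ * (nA * nQ) := by
            apply mul_le_mul htδ hBn (norm_nonneg _) hδ
        _ = ε := by rw [hεdef]; ring
    have hxlt : ‖φ ((t:ℂ) • B)‖ < 1 := lt_of_le_of_lt hxnorm hε1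
    obtain ⟨u, huv, hub⟩ := inverse_one_add (φ ((t:ℂ) • B)) hxlt
    have hφv : φ (1 + (t:ℂ) • B) = ↑u := by rw [map_add, h1, huv]
    have hunit1 : IsUnit (1 + (t:ℂ) • B) := h4 _ (hφv ▸ u.isUnit)
    have hunit : IsUnit (A + (t:ℂ) • Q) := by rw [hfact]; exact hA.mul hunit1
    refine ⟨hunit, ?_⟩
    have hinv1 : (1 + (t:ℂ) • B)⁻¹ = φ.symm ↑u⁻¹ := by
      apply Matrix.inv_eq_right_inv
      have e : φ ((1 + (t:ℂ) • B) * φ.symm ↑u⁻¹) = 1 := by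
        rw [_root_.map_mul, StarAlgEquiv.apply_symm_apply, hφv, u.mul_inv]
      have := congrArg φ.symm e
      rwa [StarAlgEquiv.symm_apply_apply, hsymm1] at this
    have hinvfull : (A + (t:ℂ) • Q)⁻¹ = (1 + (t:ℂ) • B)⁻¹ * A⁻¹ := by
      rw [hfact, Matrix.mul_inv_rev]
    rw [hinvfull, _root_.map_mul]
    have hu1 : ‖φ ((1 + (t:ℂ) • B)⁻¹)‖ ≤ (1 - ε)⁻¹ := by
      rw [hinv1, StarAlgEquiv.apply_symm_apply]
      refine hub.trans ?_
      apply inv_anti₀ hone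
      linarith
    calc ‖φ ((1 + (t:ℂ) • B)⁻¹) * φ A⁻¹‖ ≤ ‖φ ((1 + (t:ℂ) • B)⁻¹)‖ * ‖φ A⁻¹‖ :=
          norm_mul_le _ _
      _ ≤ (1 - ε)⁻¹ * nA := mul_le_mul_of_nonneg_right hu1 (norm_nonneg _)
  set p : ℝ → ℂ := fun s => (A + (s:ℂ) • Q).det with hp
  set f : ℝ → ℝ := fun s => Real.log (‖p s‖) with hf
  set F' : ℝ → ℝ := fun s => (((Q * (A + (s:ℂ) • Q).adjugate).trace) / p s).re with hF'
  have hderiv : ∀ t ∈ Set.Icc (0:ℝ) δ, HasDerivWithinAt f (F' t) (Set.Icc 0 δ) t := by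
    intro t ht
    have h0 : p t ≠ 0 :=
      ((Matrix.isUnit_iff_isUnit_det _).mp (key t ht).1).ne_zero
    exact (hasDerivAt_log_abs (hasDerivAt_det A Q t) h0).hasDerivWithinAt
  have hbound : ∀ t ∈ Set.Icc (0:ℝ) δ, ‖F' t‖ ≤ (1 - ε)⁻¹ * nA * traceNorm Q := by
    intro t ht
    obtain ⟨hunit, hnrm⟩ := key t ht
    have hdet : IsUnit (A + (t:ℂ) • Q).det := (Matrix.isUnit_iff_isUnit_det _).mp hunit
    have hdet0 : (A + (t:ℂ) • Q).det ≠ 0 := hdet.ne_zero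
    have hadj : (A + (t:ℂ) • Q).adjugate = (A + (t:ℂ) • Q).det • (A + (t:ℂ) • Q)⁻¹ := by
      rw [Matrix.inv_def, smul_smul, Ring.inverse_eq_inv', mul_inv_cancel₀ hdet0, one_smul]
    have hquot : (Q * (A + (t:ℂ) • Q).adjugate).trace / p t
        = ((A + (t:ℂ) • Q)⁻¹ * Q).trace := by
      rw [hadj, Matrix.mul_smul, Matrix.trace_smul, smul_eq_mul, Matrix.trace_mul_comm,
        show p t = (A + (t:ℂ) • Q).det from rfl]
      exact mul_div_cancel_left₀ _ hdet0
    have hFt : F' t = (((A + (t:ℂ) • Q)⁻¹ * Q).trace).re := by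
      show ((Q * (A + (t:ℂ) • Q).adjugate).trace / p t).re = _
      rw [hquot]
    rw [hFt]
    calc ‖(((A + (t:ℂ) • Q)⁻¹ * Q).trace).re‖
        ≤ ‖((A + (t:ℂ) • Q)⁻¹ * Q).trace‖ := by
          rw [Real.norm_eq_abs]; exact Complex.abs_re_le_norm _
      _ ≤ ‖Matrix.toEuclideanCLM (𝕜 := ℂ) ((A + (t:ℂ) • Q)⁻¹)‖ * traceNorm Q :=
          trace_holder _ _
      _ ≤ (1 - ε)⁻¹ * nA * traceNorm Q :=
          mul_le_mul_of_nonneg_right hnrm (traceNorm_nonneg Q)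
  have h0mem : (0:ℝ) ∈ Set.Icc (0:ℝ) δ := Set.left_mem_Icc.mpr hδ
  have hδmem : δ ∈ Set.Icc (0:ℝ) δ := Set.right_mem_Icc.mpr hδ
  have hmvt := Convex.norm_image_sub_le_of_norm_hasDerivWithin_le hderiv hbound
    (convex_Icc 0 δ) h0mem hδmem
  refine ⟨(key δ hδmem).1, ?_⟩
  have hp0 : p 0 = A.det := by
    show (A + ((0:ℝ):ℂ) • Q).det = A.det
    norm_num
  have hfδ : f δ = Real.log (‖(A + (δ:ℂ) • Q).det‖) := rfl
  have hf0 : f 0 = Real.log (‖A.det‖) := by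
    show Real.log (‖p 0‖) = _
    rw [hp0]
  calc |Real.log (‖(A + (δ:ℂ) • Q).det‖) - Real.log (‖A.det‖)|
      = ‖f δ - f 0‖ := by rw [hfδ, hf0, Real.norm_eq_abs]
    _ ≤ ((1 - ε)⁻¹ * nA * traceNorm Q) * ‖δ - 0‖ := hmvt
    _ = δ * nA * traceNorm Q / (1 - ε) := by
        rw [sub_zero, Real.norm_eq_abs, abs_of_nonneg hδ]
        field_simp
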